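/- arXiv:2508.14670 — 2 statements merged into one kernel-verified Lean document; each statement's English description precedes it below -/
import Mathlib

section
/- Let ω = e^{2πi/3}. If x is an element of the ring ℤ[1/3, ω] with |x| = 1, then x = (-ω)^t for some t ∈ {0, 1, 2, 3, 4, 5}. -/
noncomputable def ω : ℂ := Complex.exp (2 * Real.pi * Complex.I / 3)

lemma hω3 : ω ^ 3 = 1 := by
  rw [ω, ← Complex.exp_nat_mul]
  rw [show (3:ℕ) * (2 * (Real.pi:ℂ) * Complex.I / 3) = 2 * Real.pi * Complex.I by push_cast; ring]
  exact Complex.exp_two_pi_mul_I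

lemma hω1 : ω ≠ 1 := by
  intro h
  rw [ω, Complex.exp_eq_one_iff] at h
  obtain ⟨n, hn⟩ := h
  have hpi : (Real.pi : ℂ) ≠ 0 := by exact_mod_cast Real.pi_ne_zero
  have h3 : (3 * n : ℂ) = 1 := by
    have h1 : (2 * (Real.pi:ℂ) * Complex.I) * 1 = (2 * Real.pi * Complex.I) * (3 * n) := by
      linear_combination 3 * hn
    have h2 : (2 * (Real.pi:ℂ) * Complex.I) ≠ 0 := by
      simp [Complex.I_ne_zero, hpi]
    have := mul_left_cancel₀ h2 h1
    linear_combination this.symm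
  have : (3 * n : ℤ) = 1 := by exact_mod_cast h3
  omega

lemma hωq : ω ^ 2 + ω + 1 = 0 := by
  have h := hω3
  have h2 : (ω - 1) * (ω ^ 2 + ω + 1) = 0 := by linear_combination h
  rcases mul_eq_zero.1 h2 with h' | h'
  · exact absurd (by linear_combination h' : ω = 1) hω1
  · exact h'

lemma hω0 : ω ≠ 0 := by
  intro h
  have := hω3
  rw [h] at this
  norm_num at this

lemma hconj : (starRingEnd ℂ) ω = ω ^ 2 := by
  have h1 : ω * (starRingEnd ℂ) ω = 1 := by
    rw [ω, ← Complex.exp_conj, ← Complex.exp_add]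
    rw [show (2 * (Real.pi:ℂ) * Complex.I / 3) + (starRingEnd ℂ) (2 * (Real.pi:ℂ) * Complex.I / 3) = 0 by
      simp [map_div₀, Complex.conj_I, map_ofNat]; ring]
    exact Complex.exp_zero
  have h2 : ω * ω ^ 2 = 1 := by linear_combination hω3
  exact mul_left_cancel₀ hω0 (h1.trans h2.symm)

lemma hnormsq (a b : ℤ) :
    (Complex.normSq ((a:ℂ) + b * ω) : ℝ) = (a:ℝ)^2 - a*b + b^2 := by
  have hc : (Complex.normSq ((a:ℂ) + b * ω) : ℂ) = ((a:ℂ)^2 - a*b + b^2 : ℂ) := by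
    rw [← Complex.mul_conj]
    rw [map_add, map_mul]
    simp only [map_intCast, hconj]
    linear_combination ((a:ℂ)*b) * hωq + (b:ℂ)^2 * hω3
  exact_mod_cast hc

lemma descent : ∀ (n : ℕ) (a b : ℤ), a^2 - a*b + b^2 = 9^n →
    ∃ a' b' : ℤ, a = 3^n * a' ∧ b = 3^n * b' ∧ a'^2 - a'*b' + b'^2 = 1 := by
  intro n
  induction n with
  | zero => intro a b h; exact ⟨a, b, by simp, by simp, by simpa using h⟩
  | succ n ih =>
    intro a b h
    have hz : ∀ x y : ZMod 9, x^2 - x*y + y^2 = 0 → 3*x = 0 ∧ 3*y = 0 := by decide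
    have hcast : ((a:ZMod 9))^2 - (a:ZMod 9)*(b:ZMod 9) + (b:ZMod 9)^2 = 0 := by
      have := congrArg (Int.cast : ℤ → ZMod 9) h
      push_cast at this
      rw [this, show (9 : ZMod 9) = 0 by decide]
      simp
    obtain ⟨ha, hb⟩ := hz _ _ hcast
    have hda : (3:ℤ) ∣ a := by
      have : ((3*a : ℤ) : ZMod 9) = 0 := by push_cast; linear_combination ha
      have := (ZMod.intCast_zmod_eq_zero_iff_dvd (3*a) 9).1 this
      omega
    have hdb : (3:ℤ) ∣ b := by
      have : ((3*b : ℤ) : ZMod 9) = 0 := by push_cast; linear_combination hb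
      have := (ZMod.intCast_zmod_eq_zero_iff_dvd (3*b) 9).1 this
      omega
    obtain ⟨a₀, rfl⟩ := hda
    obtain ⟨b₀, rfl⟩ := hdb
    have h9 : a₀^2 - a₀*b₀ + b₀^2 = 9^n := by
      have : (9:ℤ) * (a₀^2 - a₀*b₀ + b₀^2) = 9 * 9^n := by linear_combination h
      linarith
    obtain ⟨a', b', ha', hb', h1⟩ := ih a₀ b₀ h9
    exact ⟨a', b', by rw [ha']; ring, by rw [hb']; ring, h1⟩

lemma enum (a b : ℤ) (h : a^2 - a*b + b^2 = 1) :
    (a = 1 ∧ b = 0) ∨ (a = -1 ∧ b = 0) ∨ (a = 0 ∧ b = 1) ∨ (a = 0 ∧ b = -1) ∨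
    (a = 1 ∧ b = 1) ∨ (a = -1 ∧ b = -1) := by
  have ha1 : -1 ≤ a := by nlinarith [sq_nonneg (a - 2*b), sq_nonneg (a+1)]
  have ha2 : a ≤ 1 := by nlinarith [sq_nonneg (a - 2*b), sq_nonneg (a-1)]
  have hb1 : -1 ≤ b := by nlinarith [sq_nonneg (b - 2*a), sq_nonneg (b+1)]
  have hb2 : b ≤ 1 := by nlinarith [sq_nonneg (b - 2*a), sq_nonneg (b-1)]
  interval_cases a <;> interval_cases b <;> revert h <;> norm_num

noncomputable def S : Subring ℂ where
  carrier := {z | ∃ a b : ℤ, ∃ n : ℕ, z * 3 ^ n = a + b * ω}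
  zero_mem' := ⟨0, 0, 0, by simp⟩
  one_mem' := ⟨1, 0, 0, by simp⟩
  add_mem' := by
    rintro z w ⟨a1, b1, n1, h1⟩ ⟨a2, b2, n2, h2⟩
    refine ⟨a1 * 3 ^ n2 + a2 * 3 ^ n1, b1 * 3 ^ n2 + b2 * 3 ^ n1, n1 + n2, ?_⟩
    push_cast
    rw [pow_add]
    linear_combination (3:ℂ)^n2 * h1 + (3:ℂ)^n1 * h2
  neg_mem' := by
    rintro z ⟨a, b, n, h⟩
    exact ⟨-a, -b, n, by push_cast; linear_combination -h⟩
  mul_mem' := by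
    rintro z w ⟨a1, b1, n1, h1⟩ ⟨a2, b2, n2, h2⟩
    refine ⟨a1 * a2 - b1 * b2, a1 * b2 + a2 * b1 - b1 * b2, n1 + n2, ?_⟩
    push_cast
    rw [pow_add]
    have key : ((a1:ℂ) + b1 * ω) * ((a2:ℂ) + b2 * ω)
        = (a1 * a2 - b1 * b2 : ℂ) + ((a1 * b2 + a2 * b1 - b1 * b2 : ℂ)) * ω := by
      linear_combination ((b1:ℂ) * b2) * hωq
    calc z * w * (3^n1 * 3^n2 : ℂ) = (z * 3^n1) * (w * 3^n2) := by ring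
    _ = ((a1:ℂ) + b1 * ω) * ((a2:ℂ) + b2 * ω) := by rw [h1, h2]
    _ = _ := by rw [key]

lemma mem_S (x : ℂ) (hx : x ∈ Subring.closure ({(3 : ℂ)⁻¹, ω} : Set ℂ)) :
    ∃ a b : ℤ, ∃ n : ℕ, x * 3 ^ n = a + b * ω := by
  have : Subring.closure ({(3 : ℂ)⁻¹, ω} : Set ℂ) ≤ S := by
    rw [Subring.closure_le]
    rintro z (rfl | rfl)
    · exact ⟨1, 0, 1, by norm_num⟩
    · exact ⟨0, 1, 0, by norm_num⟩
  exact this hx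

theorem stmt_2 (x : ℂ) (hx : x ∈ Subring.closure ({(3 : ℂ)⁻¹, ω} : Set ℂ))
    (habs : ‖x‖ = 1) : ∃ t : Fin 6, x = (-ω) ^ (t : ℕ) := by
  obtain ⟨a, b, n, heq⟩ := mem_S x hx
  have h3n : ((3:ℂ)^n) ≠ 0 := pow_ne_zero _ (by norm_num)
  have habs2 : ‖x * 3^n‖ = 3^n := by
    rw [norm_mul, habs, one_mul, norm_pow]
    norm_num
  have hns : Complex.normSq ((a:ℂ) + b * ω) = 9^n := by
    rw [← Complex.sq_norm, ← heq, habs2, ← pow_mul, mul_comm, pow_mul]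
    norm_num
  have hint : a^2 - a*b + b^2 = 9^n := by
    have := hnormsq a b
    rw [hns] at this
    exact_mod_cast this.symm
  obtain ⟨a', b', ha', hb', h1⟩ := descent n a b hint
  have hx' : x = (a':ℂ) + b' * ω := by
    apply mul_right_cancel₀ h3n
    rw [heq, ha', hb']
    push_cast
    ring
  rcases enum a' b' h1 with ⟨rfl, rfl⟩ | ⟨rfl, rfl⟩ | ⟨rfl, rfl⟩ | ⟨rfl, rfl⟩ | ⟨rfl, rfl⟩ | ⟨rfl, rfl⟩
  · exact ⟨0, by rw [show (((0 : Fin 6)) : ℕ) = 0 from rfl, hx']; norm_num⟩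
  · exact ⟨3, by rw [show (((3 : Fin 6)) : ℕ) = 3 from rfl, hx']; push_cast; linear_combination hω3⟩
  · exact ⟨4, by rw [show (((4 : Fin 6)) : ℕ) = 4 from rfl, hx']; push_cast; linear_combination (-ω) * hω3⟩
  · exact ⟨1, by rw [show (((1 : Fin 6)) : ℕ) = 1 from rfl, hx']; push_cast; ring⟩
  · exact ⟨5, by rw [show (((5 : Fin 6)) : ℕ) = 5 from rfl, hx']; push_cast; linear_combination hωq + ω^2 * hω3⟩
  · exact ⟨2, by rw [show (((2 : Fin 6)) : ℕ) = 2 from rfl, hx']; push_cast; linear_combination -hωq⟩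
end

section
/- Let U be a unitary on ℂ^{n₁} ⊗ ℂ^{n₂} and U₁ a unitary on ℂ^{n₁} such that U (A ⊗ I) U† = (U₁ A U₁†) ⊗ I for all A ∈ M_{n₁}(ℂ). Then there exists a unitary U₂ on ℂ^{n₂} such that U = U₁ ⊗ U₂. -/
open Matrix

open Kronecker

lemma kron_conjT {m n p q : Type*} [Fintype m] [Fintype n] [Fintype p] [Fintype q]
    (A : Matrix m n ℂ) (B : Matrix p q ℂ) : (A ⊗ₖ B)ᴴ = Aᴴ ⊗ₖ Bᴴ := by
  ext ⟨a, b⟩ ⟨c, d⟩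
  simp [conjTranspose_apply, kroneckerMap_apply]

theorem stmt_16 (n₁ n₂ : ℕ)
    (U : Matrix (Fin n₁ × Fin n₂) (Fin n₁ × Fin n₂) ℂ)
    (U₁ : Matrix (Fin n₁) (Fin n₁) ℂ)
    (hU : U ∈ Matrix.unitaryGroup (Fin n₁ × Fin n₂) ℂ)
    (hU₁ : U₁ ∈ Matrix.unitaryGroup (Fin n₁) ℂ)
    (h : ∀ A : Matrix (Fin n₁) (Fin n₁) ℂ,
      U * (A ⊗ₖ (1 : Matrix (Fin n₂) (Fin n₂) ℂ)) * Uᴴ =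
        (U₁ * A * U₁ᴴ) ⊗ₖ (1 : Matrix (Fin n₂) (Fin n₂) ℂ)) :
    ∃ U₂ : Matrix (Fin n₂) (Fin n₂) ℂ,
      U₂ ∈ Matrix.unitaryGroup (Fin n₂) ℂ ∧ U = U₁ ⊗ₖ U₂ := by
  rcases Nat.eq_zero_or_pos n₁ with h0 | hpos
  · subst h0
    refine ⟨1, one_mem _, ?_⟩
    ext ⟨i, _⟩
    exact i.elim0
  have hUl : Uᴴ * U = 1 := by
    have := hU.1; rwa [Matrix.star_eq_conjTranspose] at this
  have hUr : U * Uᴴ = 1 := by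
    have := hU.2; rwa [Matrix.star_eq_conjTranspose] at this
  have hU₁l : U₁ᴴ * U₁ = 1 := by
    have := hU₁.1; rwa [Matrix.star_eq_conjTranspose] at this
  have hU₁r : U₁ * U₁ᴴ = 1 := by
    have := hU₁.2; rwa [Matrix.star_eq_conjTranspose] at this
  set V : Matrix (Fin n₁ × Fin n₂) (Fin n₁ × Fin n₂) ℂ :=
    (U₁ᴴ ⊗ₖ (1 : Matrix (Fin n₂) (Fin n₂) ℂ)) * U with hVdef
  have hcomm : ∀ A : Matrix (Fin n₁) (Fin n₁) ℂ,
      V * (A ⊗ₖ (1 : Matrix (Fin n₂) (Fin n₂) ℂ)) =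
        (A ⊗ₖ (1 : Matrix (Fin n₂) (Fin n₂) ℂ)) * V := by
    intro A
    have hUA : U * (A ⊗ₖ (1 : Matrix (Fin n₂) (Fin n₂) ℂ)) =
        ((U₁ * A * U₁ᴴ) ⊗ₖ (1 : Matrix (Fin n₂) (Fin n₂) ℂ)) * U := by
      calc U * (A ⊗ₖ (1 : Matrix (Fin n₂) (Fin n₂) ℂ))
          = U * (A ⊗ₖ (1 : Matrix (Fin n₂) (Fin n₂) ℂ)) * (Uᴴ * U) := by
            rw [hUl, mul_one]
        _ = (U * (A ⊗ₖ (1 : Matrix (Fin n₂) (Fin n₂) ℂ)) * Uᴴ) * U := by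
            simp only [mul_assoc]
        _ = ((U₁ * A * U₁ᴴ) ⊗ₖ (1 : Matrix (Fin n₂) (Fin n₂) ℂ)) * U := by rw [h A]
    calc V * (A ⊗ₖ (1 : Matrix (Fin n₂) (Fin n₂) ℂ))
        = (U₁ᴴ ⊗ₖ (1 : Matrix (Fin n₂) (Fin n₂) ℂ)) *
            (((U₁ * A * U₁ᴴ) ⊗ₖ (1 : Matrix (Fin n₂) (Fin n₂) ℂ)) * U) := by
          rw [hVdef, mul_assoc, hUA]
      _ = ((U₁ᴴ * (U₁ * A * U₁ᴴ)) ⊗ₖ ((1 : Matrix (Fin n₂) (Fin n₂) ℂ) * 1)) * U := by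
          rw [← mul_assoc, ← Matrix.mul_kronecker_mul]
      _ = ((A * U₁ᴴ) ⊗ₖ ((1 : Matrix (Fin n₂) (Fin n₂) ℂ) * 1)) * U := by
          rw [show U₁ᴴ * (U₁ * A * U₁ᴴ) = (U₁ᴴ * U₁) * A * U₁ᴴ by simp only [mul_assoc], hU₁l, one_mul]
      _ = ((A ⊗ₖ (1 : Matrix (Fin n₂) (Fin n₂) ℂ)) *
            (U₁ᴴ ⊗ₖ (1 : Matrix (Fin n₂) (Fin n₂) ℂ))) * U := by
          rw [← Matrix.mul_kronecker_mul]
      _ = (A ⊗ₖ (1 : Matrix (Fin n₂) (Fin n₂) ℂ)) * V := by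
          rw [hVdef, mul_assoc]
  obtain ⟨i₀⟩ : Nonempty (Fin n₁) := ⟨⟨0, hpos⟩⟩
  set U₂ : Matrix (Fin n₂) (Fin n₂) ℂ := Matrix.of fun b d => V (i₀, b) (i₀, d) with hU₂def
  have key : ∀ (a k : Fin n₁) (b d : Fin n₂),
      V (a, b) (k, d) = if a = k then U₂ b d else 0 := by
    intro a k b d
    have := congrFun (congrFun (hcomm (Matrix.single k i₀ 1)) (a, b)) (i₀, d)
    simp [Matrix.mul_apply, Matrix.kroneckerMap_apply, Matrix.single,
      Matrix.one_apply, Fintype.sum_prod_type, hU₂def, ite_and, eq_comm] at this ⊢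
    convert this using 2
  have hV : V = (1 : Matrix (Fin n₁) (Fin n₁) ℂ) ⊗ₖ U₂ := by
    ext ⟨a, b⟩ ⟨k, d⟩
    rw [key a k b d]
    simp [Matrix.kroneckerMap_apply, Matrix.one_apply, ite_mul]
  have hUeq : U = U₁ ⊗ₖ U₂ := by
    calc U = ((U₁ * U₁ᴴ) ⊗ₖ ((1 : Matrix (Fin n₂) (Fin n₂) ℂ) * 1)) * U := by
          rw [hU₁r, Matrix.one_mul, Matrix.one_kronecker_one, Matrix.one_mul]
      _ = (U₁ ⊗ₖ (1 : Matrix (Fin n₂) (Fin n₂) ℂ)) * V := by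
          rw [Matrix.mul_kronecker_mul, hVdef, mul_assoc]
      _ = (U₁ ⊗ₖ (1 : Matrix (Fin n₂) (Fin n₂) ℂ)) *
            ((1 : Matrix (Fin n₁) (Fin n₁) ℂ) ⊗ₖ U₂) := by rw [hV]
      _ = U₁ ⊗ₖ U₂ := by rw [← Matrix.mul_kronecker_mul, Matrix.mul_one, Matrix.one_mul]
  have hVunit : Vᴴ * V = 1 := by
    rw [hVdef, Matrix.conjTranspose_mul, kron_conjT, Matrix.conjTranspose_conjTranspose,
      Matrix.conjTranspose_one]
    calc Uᴴ * (U₁ ⊗ₖ (1 : Matrix (Fin n₂) (Fin n₂) ℂ)) *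
          ((U₁ᴴ ⊗ₖ (1 : Matrix (Fin n₂) (Fin n₂) ℂ)) * U)
        = Uᴴ * (((U₁ * U₁ᴴ) ⊗ₖ ((1 : Matrix (Fin n₂) (Fin n₂) ℂ) * 1)) * U) := by
          rw [Matrix.mul_kronecker_mul, mul_assoc, mul_assoc]
      _ = Uᴴ * U := by
          rw [hU₁r, Matrix.one_mul, Matrix.one_kronecker_one, Matrix.one_mul]
      _ = 1 := hUl
  have hU₂unit : U₂ᴴ * U₂ = 1 := by
    rw [hV] at hVunit
    rw [kron_conjT, Matrix.conjTranspose_one, ← Matrix.mul_kronecker_mul,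
      Matrix.one_mul] at hVunit
    ext b d
    have := congrFun (congrFun hVunit (i₀, b)) (i₀, d)
    simpa [Matrix.kroneckerMap_apply, Matrix.one_apply] using this
  refine ⟨U₂, ?_, hUeq⟩
  rw [Matrix.mem_unitaryGroup_iff']
  rwa [Matrix.star_eq_conjTranspose]
end
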